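/- Let ψ be a unit vector in ℂ^d, let k ≥ 1, let p : Fin m → ℝ be a probability vector (p_z ≥ 0 for all z and ∑_z p_z = 1), and let σ_z (z ∈ Fin m) be density matrices on ℂ^d. Then (1/2)‖∑_z p_z σ_z^{⊗k} − (|ψ⟩⟨ψ|)^{⊗k}‖₁ ≤ k · ∑_z p_z √(1 − ⟨ψ|σ_z|ψ⟩). -/

import Mathlib

open Matrix ComplexOrder

noncomputable def traceNorm {n : Type*} [Fintype n] [DecidableEq n]
    (A : Matrix n n ℂ) : ℝ :=
  (((Matrix.posSemidef_conjTranspose_mul_self A).1.eigenvectorUnitary.1 *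
    diagonal (((↑) : ℝ → ℂ) ∘ (√·) ∘ (Matrix.posSemidef_conjTranspose_mul_self A).1.eigenvalues) *
    (star (Matrix.posSemidef_conjTranspose_mul_self A).1.eigenvectorUnitary : Matrix n n ℂ)).trace).re

noncomputable def ketbra {d : ℕ} (ψ : Fin d → ℂ) : Matrix (Fin d) (Fin d) ℂ :=
  fun i j => ψ i * (starRingEnd ℂ) (ψ j)

noncomputable def kronPow {d : ℕ} (M : Matrix (Fin d) (Fin d) ℂ) (k : ℕ) :
    Matrix (Fin k → Fin d) (Fin k → Fin d) ℂ :=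
  fun i j => ∏ t : Fin k, M (i t) (j t)

noncomputable def fid {d : ℕ} (ψ : Fin d → ℂ) (σ : Matrix (Fin d) (Fin d) ℂ) : ℝ :=
  (∑ i, ∑ j, (starRingEnd ℂ) (ψ i) * σ i j * ψ j).re


section Aux

open scoped MatrixOrder

section Helpers
variable {n : Type*} [Fintype n] [DecidableEq n]

omit [DecidableEq n] in
lemma star_dot_comm (x y : n → ℂ) : star x ⬝ᵥ y = star (star y ⬝ᵥ x) := by
  simp [dotProduct, Finset.mul_sum, mul_comm]

omit [DecidableEq n] in
lemma dot_self_eq_ofReal (x : n → ℂ) :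
    star x ⬝ᵥ x = ((∑ i, Complex.normSq (x i) : ℝ) : ℂ) := by
  simp [dotProduct, Complex.normSq_eq_conj_mul_self]

lemma psd_diag_re_nonneg {A : Matrix n n ℂ} (hA : A.PosSemidef) (i : n) :
    0 ≤ (A i i).re := by
  have h := hA.dotProduct_mulVec_nonneg (Pi.single i 1)
  have hs : star (Pi.single i 1 : n → ℂ) = Pi.single i 1 := by
    ext j; by_cases hj : j = i <;> simp [Pi.single_apply, hj]
  have : star (Pi.single i 1 : n → ℂ) ⬝ᵥ (A *ᵥ Pi.single i 1) = A i i := by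
    rw [hs]
    simp [dotProduct, mulVec, Pi.single_apply, Finset.sum_ite_eq, ite_mul, mul_ite]
  rw [this] at h
  exact (Complex.le_def.mp h).1

lemma psd_trace_re_nonneg {A : Matrix n n ℂ} (hA : A.PosSemidef) :
    0 ≤ A.trace.re := by
  rw [Matrix.trace]
  simp only [Complex.re_sum]
  exact Finset.sum_nonneg fun i _ => psd_diag_re_nonneg hA i

omit [DecidableEq n] in
lemma psd_smul_real {A : Matrix n n ℂ} (hA : A.PosSemidef) {c : ℝ} (hc : 0 ≤ c) :
    ((c : ℂ) • A).PosSemidef := by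
  refine Matrix.PosSemidef.of_dotProduct_mulVec_nonneg ?_ ?_
  · unfold Matrix.IsHermitian
    rw [conjTranspose_smul, hA.1.eq]
    congr 1
    simp
  · intro x
    have h := hA.dotProduct_mulVec_nonneg x
    have heq : star x ⬝ᵥ (((c : ℂ) • A) *ᵥ x) = (c : ℂ) * (star x ⬝ᵥ (A *ᵥ x)) := by
      rw [Matrix.smul_mulVec, dotProduct_smul]
      simp
    rw [heq]
    exact mul_nonneg (by exact_mod_cast hc) h

lemma trace_mul_psd_re_nonneg {A B : Matrix n n ℂ} (hA : A.PosSemidef)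
    (hB : B.PosSemidef) : 0 ≤ (A * B).trace.re := by
  have hS := (CFC.sqrt_nonneg B).posSemidef
  have h2 : CFC.sqrt B * CFC.sqrt B = B := CFC.sqrt_mul_sqrt_self B hB.nonneg
  have base := psd_trace_re_nonneg (hA.mul_mul_conjTranspose_same (CFC.sqrt B))
  rw [hS.1.eq] at base
  have e2 : (CFC.sqrt B * A * CFC.sqrt B).trace = (A * B).trace := by
    rw [Matrix.trace_mul_cycle, h2, Matrix.trace_mul_comm]
  rwa [e2] at base

omit [DecidableEq n] in
lemma cs_dot (a b : n → ℂ) :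
    Complex.normSq (star a ⬝ᵥ b) ≤ (star a ⬝ᵥ a).re * (star b ⬝ᵥ b).re := by
  have ha : (star a ⬝ᵥ a).re = ‖(WithLp.equiv 2 (n → ℂ)).symm a‖ ^ 2 := by
    rw [← @inner_self_eq_norm_sq ℂ, EuclideanSpace.inner_eq_star_dotProduct, dotProduct_comm]
    rfl
  have hb : (star b ⬝ᵥ b).re = ‖(WithLp.equiv 2 (n → ℂ)).symm b‖ ^ 2 := by
    rw [← @inner_self_eq_norm_sq ℂ, EuclideanSpace.inner_eq_star_dotProduct, dotProduct_comm]
    rfl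
  have hip : (inner ℂ ((WithLp.equiv 2 (n → ℂ)).symm a)
      ((WithLp.equiv 2 (n → ℂ)).symm b) : ℂ) = star a ⬝ᵥ b := by
    rw [EuclideanSpace.inner_eq_star_dotProduct, dotProduct_comm]
    rfl
  have hcs := norm_inner_le_norm (𝕜 := ℂ) ((WithLp.equiv 2 (n → ℂ)).symm a)
      ((WithLp.equiv 2 (n → ℂ)).symm b)
  have h2 : Complex.normSq (star a ⬝ᵥ b) = ‖star a ⬝ᵥ b‖ ^ 2 := by
    rw [← Complex.sq_norm]
  rw [h2, ha, hb, ← hip]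
  have hn : (0:ℝ) ≤ ‖(inner ℂ ((WithLp.equiv 2 (n → ℂ)).symm a) ((WithLp.equiv 2 (n → ℂ)).symm b) : ℂ)‖ := norm_nonneg _
  nlinarith [norm_nonneg ((WithLp.equiv 2 (n → ℂ)).symm a), norm_nonneg ((WithLp.equiv 2 (n → ℂ)).symm b)]

end Helpers


variable {d : ℕ}

lemma ketbra_mulVec (ψ x : Fin d → ℂ) : ketbra ψ *ᵥ x = (star ψ ⬝ᵥ x) • ψ := by
  funext i
  simp only [ketbra, mulVec, dotProduct, Pi.smul_apply, smul_eq_mul, Finset.sum_mul]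
  apply Finset.sum_congr rfl; intro j _
  simp [Pi.star_apply]; ring

lemma ketbra_isHermitian (ψ : Fin d → ℂ) : (ketbra ψ).IsHermitian := by
  ext i j
  simp [ketbra, conjTranspose, mul_comm]

lemma dot_ketbra_mulVec (ψ x : Fin d → ℂ) :
    star x ⬝ᵥ (ketbra ψ *ᵥ x) = ((Complex.normSq (star ψ ⬝ᵥ x) : ℝ) : ℂ) := by
  have hx : star x ⬝ᵥ ψ = star (star ψ ⬝ᵥ x) := star_dot_comm x ψ
  rw [ketbra_mulVec, dotProduct_smul, hx, smul_eq_mul, Complex.star_def, Complex.mul_conj]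

lemma ketbra_posSemidef (ψ : Fin d → ℂ) : (ketbra ψ).PosSemidef := by
  refine Matrix.PosSemidef.of_dotProduct_mulVec_nonneg (ketbra_isHermitian ψ) fun x => ?_
  rw [dot_ketbra_mulVec]
  exact_mod_cast Complex.normSq_nonneg _

lemma trace_ketbra (ψ : Fin d → ℂ) : (ketbra ψ).trace = star ψ ⬝ᵥ ψ := by
  simp [Matrix.trace, ketbra, dotProduct, Matrix.diag, mul_comm]

lemma trace_mul_ketbra (σ : Matrix (Fin d) (Fin d) ℂ) (w : Fin d → ℂ) :
    (σ * ketbra w).trace = star w ⬝ᵥ (σ *ᵥ w) := by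
  simp only [Matrix.trace, Matrix.diag, Matrix.mul_apply, ketbra, dotProduct, mulVec,
    Finset.mul_sum]
  apply Finset.sum_congr rfl; intro i _
  apply Finset.sum_congr rfl; intro j _
  simp [Pi.star_apply]; ring

lemma bessel_two (ψ u x : Fin d → ℂ) (hψ : star ψ ⬝ᵥ ψ = 1) (hu : star u ⬝ᵥ u = 1)
    (ho : star ψ ⬝ᵥ u = 0) :
    Complex.normSq (star ψ ⬝ᵥ x) + Complex.normSq (star u ⬝ᵥ x) ≤ (star x ⬝ᵥ x).re := by
  have ho' : star u ⬝ᵥ ψ = 0 := by rw [star_dot_comm, ho, star_zero]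
  set z1 := star ψ ⬝ᵥ x with hz1
  set z2 := star u ⬝ᵥ x with hz2
  set y := x - z1 • ψ - z2 • u with hy
  have h0 : 0 ≤ (star y ⬝ᵥ y).re := by
    rw [dot_self_eq_ofReal, Complex.ofReal_re]
    exact Finset.sum_nonneg fun i _ => Complex.normSq_nonneg _
  have hxψ : star x ⬝ᵥ ψ = star z1 := by rw [star_dot_comm]
  have hxu : star x ⬝ᵥ u = star z2 := by rw [star_dot_comm]
  have hexp : star y ⬝ᵥ y
      = star x ⬝ᵥ x - ((Complex.normSq z1 : ℝ) : ℂ) - ((Complex.normSq z2 : ℝ) : ℂ) := by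
    simp only [hy, star_sub, star_smul, sub_dotProduct, dotProduct_sub, smul_dotProduct,
      dotProduct_smul, hψ, hu, ho, ho', ← hz1, ← hz2, hxψ, hxu, smul_eq_mul, star_star]
    simp only [Complex.star_def, Complex.normSq_eq_conj_mul_self]
    ring
  rw [hexp] at h0
  simp only [Complex.sub_re, Complex.ofReal_re] at h0
  linarith
lemma bessel_one (ψ x : Fin d → ℂ) (hψ : star ψ ⬝ᵥ ψ = 1) :
    Complex.normSq (star ψ ⬝ᵥ x) ≤ (star x ⬝ᵥ x).re := by
  set z1 := star ψ ⬝ᵥ x with hz1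
  set y := x - z1 • ψ with hy
  have h0 : 0 ≤ (star y ⬝ᵥ y).re := by
    rw [dot_self_eq_ofReal, Complex.ofReal_re]
    exact Finset.sum_nonneg fun i _ => Complex.normSq_nonneg _
  have hxψ : star x ⬝ᵥ ψ = star z1 := by rw [star_dot_comm]
  have hexp : star y ⬝ᵥ y = star x ⬝ᵥ x - ((Complex.normSq z1 : ℝ) : ℂ) := by
    simp only [hy, star_sub, star_smul, sub_dotProduct, dotProduct_sub, smul_dotProduct,
      dotProduct_smul, hψ, ← hz1, hxψ, smul_eq_mul, star_star]
    simp only [Complex.star_def, Complex.normSq_eq_conj_mul_self]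
    ring
  rw [hexp] at h0
  simp only [Complex.sub_re, Complex.ofReal_re] at h0
  linarith

section Core
variable {d : ℕ}

lemma scalar_core (r b c d' e β : ℝ) (hr : 0 ≤ r) (hb : 0 ≤ b) (hc : 0 ≤ c)
    (hd : 0 ≤ d') (he : 0 ≤ e) (hβ : 0 ≤ β)
    (h1 : r^2 + b^2 = 1) (h2 : c^2 + d'^2 = 1) (h3 : e ≤ d'*r) (h4 : β ≤ b*e) :
    c^2*r^2 + 2*c*β - e^2 ≤ r := by
  have hr1 : r ≤ 1 := by nlinarith
  have hc1 : c ≤ 1 := by nlinarith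
  have hβ' : 2*c*β ≤ 2*c*(b*e) := by nlinarith [mul_nonneg hc hβ]
  rcases le_or_gt c r with hcase | hcase
  · nlinarith [sq_nonneg (c*b - e)]
  · have hdr : d'*r ≤ c*b := by
      nlinarith [sq_nonneg (d'*r), sq_nonneg (c*b), mul_nonneg hd hr, mul_nonneg hc hb]
    have hmono : 2*c*b*e - e^2 ≤ 2*c*b*(d'*r) - (d'*r)^2 := by
      nlinarith [mul_nonneg (sub_nonneg.2 h3) (by nlinarith : (0:ℝ) ≤ 2*c*b - d'*r - e)]
    have hcs : (2*c^2 - 1)*r + 2*c*d'*b ≤ 1 := by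
      nlinarith [sq_nonneg (2*c^2 - 1 - r), sq_nonneg (2*c*d' - b)]
    nlinarith [mul_nonneg hr (sub_nonneg.2 hcs)]

lemma one_sub_ketbra_psd (ψ : Fin d → ℂ) (hψ : star ψ ⬝ᵥ ψ = 1) :
    ((1 : Matrix (Fin d) (Fin d) ℂ) - ketbra ψ).PosSemidef := by
  refine Matrix.PosSemidef.of_dotProduct_mulVec_nonneg
    ((Matrix.isHermitian_one).sub (ketbra_isHermitian ψ)) fun x => ?_
  rw [Matrix.sub_mulVec, dotProduct_sub, Matrix.one_mulVec, dot_ketbra_mulVec,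
    dot_self_eq_ofReal]
  rw [← Complex.ofReal_sub]
  rw [Complex.zero_le_real]
  have := bessel_one ψ x hψ
  rw [dot_self_eq_ofReal, Complex.ofReal_re] at this
  linarith

lemma one_sub_two_ketbra_psd (ψ u : Fin d → ℂ) (hψ : star ψ ⬝ᵥ ψ = 1)
    (hu : star u ⬝ᵥ u = 1) (ho : star ψ ⬝ᵥ u = 0) :
    ((1 : Matrix (Fin d) (Fin d) ℂ) - ketbra ψ - ketbra u).PosSemidef := by
  refine Matrix.PosSemidef.of_dotProduct_mulVec_nonneg
    (((Matrix.isHermitian_one).sub (ketbra_isHermitian ψ)).sub (ketbra_isHermitian u))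
    fun x => ?_
  rw [Matrix.sub_mulVec, Matrix.sub_mulVec, dotProduct_sub, dotProduct_sub,
    Matrix.one_mulVec, dot_ketbra_mulVec, dot_ketbra_mulVec, dot_self_eq_ofReal]
  rw [← Complex.ofReal_sub, ← Complex.ofReal_sub]
  rw [Complex.zero_le_real]
  have := bessel_two ψ u x hψ hu ho
  rw [dot_self_eq_ofReal, Complex.ofReal_re] at this
  linarith

lemma fid_le_one {σ : Matrix (Fin d) (Fin d) ℂ} (hσ : σ.PosSemidef) (hσtr : σ.trace = 1)
    (ψ : Fin d → ℂ) (hψ : star ψ ⬝ᵥ ψ = 1) :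
    (star ψ ⬝ᵥ (σ *ᵥ ψ)).re ≤ 1 := by
  have h := trace_mul_psd_re_nonneg hσ (one_sub_ketbra_psd ψ hψ)
  rw [Matrix.mul_sub, Matrix.mul_one, Matrix.trace_sub, trace_mul_ketbra, hσtr] at h
  simp only [Complex.sub_re, Complex.one_re] at h
  linarith

lemma sigma_pair_bound {σ : Matrix (Fin d) (Fin d) ℂ} (hσ : σ.PosSemidef)
    (hσtr : σ.trace = 1) (ψ u : Fin d → ℂ) (hψ : star ψ ⬝ᵥ ψ = 1)
    (hu : star u ⬝ᵥ u = 1) (ho : star ψ ⬝ᵥ u = 0) :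
    (star ψ ⬝ᵥ (σ *ᵥ ψ)).re + (star u ⬝ᵥ (σ *ᵥ u)).re ≤ 1 := by
  have h := trace_mul_psd_re_nonneg hσ (one_sub_two_ketbra_psd ψ u hψ hu ho)
  rw [Matrix.mul_sub, Matrix.mul_sub, Matrix.mul_one, Matrix.trace_sub, Matrix.trace_sub,
    trace_mul_ketbra, trace_mul_ketbra, hσtr] at h
  simp only [Complex.sub_re, Complex.one_re] at h
  linarith

end Core

section CoreIneq
variable {d : ℕ}

lemma psd_dot_real {n : Type*} [Fintype n] {A : Matrix n n ℂ} (hA : A.PosSemidef)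
    (x : n → ℂ) : star x ⬝ᵥ (A *ᵥ x) = (((star x ⬝ᵥ (A *ᵥ x)).re : ℝ) : ℂ) := by
  have h := Complex.le_def.mp (hA.dotProduct_mulVec_nonneg x)
  apply Complex.ext
  · simp
  · simp [← h.2]

lemma core_ineq {σ : Matrix (Fin d) (Fin d) ℂ} (hσ : σ.PosSemidef) (hσtr : σ.trace = 1)
    (ψ v : Fin d → ℂ) (hψ : star ψ ⬝ᵥ ψ = 1) (hv : star v ⬝ᵥ v = 1) :
    Complex.normSq (star ψ ⬝ᵥ v) - (star v ⬝ᵥ (σ *ᵥ v)).re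
      ≤ Real.sqrt (1 - (star ψ ⬝ᵥ (σ *ᵥ ψ)).re) := by
  set F := (star ψ ⬝ᵥ (σ *ᵥ ψ)).re with hF
  have hF0 : 0 ≤ F := (Complex.le_def.mp (hσ.dotProduct_mulVec_nonneg ψ)).1
  have hF1 : F ≤ 1 := fid_le_one hσ hσtr ψ hψ
  -- square root of σ
  set S := CFC.sqrt σ with hSdef
  have hSherm : Sᴴ = S := (CFC.sqrt_nonneg σ).posSemidef.1
  have hSS : S * S = σ := CFC.sqrt_mul_sqrt_self σ hσ.nonneg
  have dot_sigma : ∀ x y : Fin d → ℂ,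
      star x ⬝ᵥ (σ *ᵥ y) = star (S *ᵥ x) ⬝ᵥ (S *ᵥ y) := by
    intro x y
    rw [star_mulVec, hSherm, ← Matrix.dotProduct_mulVec, Matrix.mulVec_mulVec, hSS]
  set a := star ψ ⬝ᵥ v with ha
  set t := Complex.normSq a with htdef
  have ht0 : 0 ≤ t := Complex.normSq_nonneg _
  set u := v - a • ψ with hu
  have h_orth : star ψ ⬝ᵥ u = 0 := by
    rw [hu, dotProduct_sub, dotProduct_smul, hψ, ← ha, smul_eq_mul, mul_one, sub_self]
  have hvψ : star v ⬝ᵥ ψ = star a := by rw [star_dot_comm, ha]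
  have h_u_self : star u ⬝ᵥ u = ((1 - t : ℝ) : ℂ) := by
    rw [hu]
    simp only [star_sub, star_smul, sub_dotProduct, dotProduct_sub, smul_dotProduct,
      dotProduct_smul, hψ, hv, ← ha, hvψ, smul_eq_mul]
    simp [htdef, Complex.ofReal_sub, Complex.normSq_eq_conj_mul_self]
  have ht1 : t ≤ 1 := by
    have h0 : 0 ≤ (star u ⬝ᵥ u).re := by
      rw [dot_self_eq_ofReal, Complex.ofReal_re]
      exact Finset.sum_nonneg fun i _ => Complex.normSq_nonneg _
    rw [h_u_self, Complex.ofReal_re] at h0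
    linarith
  set s := (star u ⬝ᵥ (σ *ᵥ u)).re with hsdef
  have hs0 : 0 ≤ s := (Complex.le_def.mp (hσ.dotProduct_mulVec_nonneg u)).1
  set B := star ψ ⬝ᵥ (σ *ᵥ u) with hBdef
  have hB2 : Complex.normSq B ≤ F * s := by
    have h1 := cs_dot (S *ᵥ ψ) (S *ᵥ u)
    rw [hBdef, dot_sigma]
    calc Complex.normSq (star (S *ᵥ ψ) ⬝ᵥ (S *ᵥ u))
        ≤ (star (S *ᵥ ψ) ⬝ᵥ (S *ᵥ ψ)).re * (star (S *ᵥ u) ⬝ᵥ (S *ᵥ u)).re := h1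
      _ = F * s := by rw [← dot_sigma, ← dot_sigma]
  -- s ≤ (1-t)(1-F)
  have hs_up : s ≤ (1 - t) * (1 - F) := by
    rcases eq_or_lt_of_le ht1 with hteq | hlt
    · -- t = 1 : u = 0
      have hu0 : u = 0 := by
        have h0 : star u ⬝ᵥ u = 0 := by rw [h_u_self, ← hteq]; simp
        rw [dot_self_eq_ofReal] at h0
        have : ∑ i, Complex.normSq (u i) = 0 := by exact_mod_cast h0
        have hz := (Finset.sum_eq_zero_iff_of_nonneg
          (fun i _ => Complex.normSq_nonneg (u i))).mp this
        funext i
        exact Complex.normSq_eq_zero.mp (hz i (Finset.mem_univ i))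
      rw [hsdef, hu0]
      simp [← hteq]
    · have h1t : 0 < 1 - t := by linarith
      set c : ℝ := 1 / Real.sqrt (1 - t) with hc
      have hsq : Real.sqrt (1 - t) ^ 2 = 1 - t := Real.sq_sqrt (le_of_lt h1t)
      have hsqpos : 0 < Real.sqrt (1 - t) := Real.sqrt_pos.mpr h1t
      set u' := ((c : ℂ)) • u with hu'
      have hcc : ((c:ℂ)) * ((c:ℂ)) = ((1/(1-t) : ℝ) : ℂ) := by
        rw [← Complex.ofReal_mul]
        congr 1
        rw [hc, div_mul_div_comm, one_mul, Real.mul_self_sqrt (le_of_lt h1t)]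
      have hu'1 : star u' ⬝ᵥ u' = 1 := by
        rw [hu', star_smul, smul_dotProduct, dotProduct_smul, h_u_self]
        simp only [smul_eq_mul, Complex.star_def, Complex.conj_ofReal]
        rw [← mul_assoc, hcc, ← Complex.ofReal_mul]
        have : 1 / (1 - t) * (1 - t) = 1 := by field_simp
        rw [this, Complex.ofReal_one]
      have ho' : star ψ ⬝ᵥ u' = 0 := by
        rw [hu', dotProduct_smul, h_orth, smul_zero]
      have hpair := sigma_pair_bound hσ hσtr ψ u' hψ hu'1 ho'
      have hσu' : (star u' ⬝ᵥ (σ *ᵥ u')).re = (1/(1-t)) * s := by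
        rw [hu', star_smul, Matrix.mulVec_smul, smul_dotProduct, dotProduct_smul]
        simp only [smul_eq_mul, Complex.star_def, Complex.conj_ofReal]
        rw [← mul_assoc, hcc]
        rw [psd_dot_real hσ u, ← hsdef]
        rw [← Complex.ofReal_mul, Complex.ofReal_re]
      rw [hσu'] at hpair
      have h2 : s / (1-t) ≤ 1 - F := by
        rw [one_div] at hpair
        have : (1 - t)⁻¹ * s = s / (1 - t) := by ring
        rw [this] at hpair
        linarith
      have h3 := (div_le_iff₀ h1t).mp h2
      calc s ≤ (1-F)*(1-t) := h3
        _ = (1-t)*(1-F) := by ring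
  -- expansion of the quadratic form at v
  have hv_dec : v = a • ψ + u := by rw [hu]; ring_nf
  have huσψ : star u ⬝ᵥ (σ *ᵥ ψ) = star B := by
    rw [hBdef, dot_sigma, dot_sigma, star_dot_comm]
  have hψσψ : star ψ ⬝ᵥ (σ *ᵥ ψ) = ((F:ℝ):ℂ) := psd_dot_real hσ ψ
  have huσu : star u ⬝ᵥ (σ *ᵥ u) = ((s:ℝ):ℂ) := psd_dot_real hσ u
  have h_expand : (star v ⬝ᵥ (σ *ᵥ v)).re = t * F + 2*(star a * B).re + s := by
    conv_lhs => rw [hv_dec]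
    rw [Matrix.mulVec_add, Matrix.mulVec_smul, star_add, star_smul,
      add_dotProduct, smul_dotProduct, dotProduct_add, dotProduct_add,
      dotProduct_smul, dotProduct_smul]
    rw [hψσψ, huσψ, huσu, ← hBdef]
    simp only [smul_eq_mul, mul_add]
    have hsa : star a * (a * ((F:ℝ):ℂ)) = ((t*F : ℝ):ℂ) := by
      rw [← mul_assoc, mul_comm (star a) a, Complex.star_def, Complex.mul_conj]
      rw [← Complex.ofReal_mul, htdef]
    rw [hsa]
    have h3 : (a * star B).re = (star a * B).re := by
      have he : a * star B = star (star a * B) := by simp [StarMul.star_mul, mul_comm]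
      rw [he, Complex.star_def, Complex.conj_re]
    simp only [Complex.add_re, Complex.ofReal_re]
    rw [h3]
    ring
  -- abs bounds
  set β := ‖B‖ with hβdef
  have hβ0 : 0 ≤ β := norm_nonneg B
  have habs_a : ‖a‖ = Real.sqrt t := by
    rw [htdef, Complex.norm_def]
  have hre_bound : -(2*(star a * B).re) ≤ 2 * Real.sqrt t * β := by
    have h1 : |(star a * B).re| ≤ ‖star a * B‖ := Complex.abs_re_le_norm _
    have h2 : ‖star a * B‖ = Real.sqrt t * β := by
      rw [norm_mul, Complex.star_def, Complex.norm_conj, habs_a]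
    nlinarith [abs_nonneg ((star a * B).re), neg_abs_le ((star a * B).re)]
  -- final
  have key := scalar_core (Real.sqrt (1-F)) (Real.sqrt F) (Real.sqrt t) (Real.sqrt (1-t))
    (Real.sqrt s) β (Real.sqrt_nonneg _) (Real.sqrt_nonneg _) (Real.sqrt_nonneg _)
    (Real.sqrt_nonneg _) (Real.sqrt_nonneg _) hβ0
    (by rw [Real.sq_sqrt (by linarith : (0:ℝ) ≤ 1 - F), Real.sq_sqrt hF0]; ring)
    (by rw [Real.sq_sqrt (by linarith : (0:ℝ) ≤ 1 - t), Real.sq_sqrt ht0]; ring)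
    (by rw [← Real.sqrt_mul (by linarith : (0:ℝ) ≤ 1 - t)]
        exact Real.sqrt_le_sqrt hs_up)
    (by rw [← Real.sqrt_mul hF0, hβdef, Complex.norm_def]
        exact Real.sqrt_le_sqrt hB2)
  rw [Real.sq_sqrt ht0, Real.sq_sqrt (by linarith : (0:ℝ) ≤ 1 - F), Real.sq_sqrt hs0] at key
  rw [h_expand]
  nlinarith [key, hre_bound]

end CoreIneq

section Proj
variable {d : ℕ}

lemma proj_bound {σ : Matrix (Fin d) (Fin d) ℂ} (hσ : σ.PosSemidef) (hσtr : σ.trace = 1)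
    (ψ : Fin d → ℂ) (hψ : star ψ ⬝ᵥ ψ = 1)
    (P : Matrix (Fin d) (Fin d) ℂ) (hP : P.PosSemidef) (hidem : P * P = P) :
    ((ketbra ψ - σ) * P).trace.re ≤ Real.sqrt (1 - (star ψ ⬝ᵥ (σ *ᵥ ψ)).re) := by
  have hPH : Pᴴ = P := hP.1
  set w := P *ᵥ ψ with hw
  have hwdot : ∀ x, star w ⬝ᵥ x = star ψ ⬝ᵥ (P *ᵥ x) := by
    intro x
    rw [hw, star_mulVec, ← Matrix.dotProduct_mulVec, hPH]
  have hww : star w ⬝ᵥ w = star ψ ⬝ᵥ w := by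
    rw [hwdot w, hw, Matrix.mulVec_mulVec, hidem]
  have hreal : star ψ ⬝ᵥ w = ((∑ i, Complex.normSq (w i) : ℝ) : ℂ) := by
    rw [← hww, dot_self_eq_ofReal]
  set T := ∑ i, Complex.normSq (w i) with hTdef
  have hT0 : 0 ≤ T := Finset.sum_nonneg fun i _ => Complex.normSq_nonneg _
  have htr1 : (ketbra ψ * P).trace = ((T : ℝ) : ℂ) := by
    rw [Matrix.trace_mul_comm, trace_mul_ketbra, ← hw, hreal]
  have hgoal_eq : ((ketbra ψ - σ) * P).trace.re = T - (σ * P).trace.re := by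
    rw [Matrix.sub_mul, Matrix.trace_sub, Complex.sub_re, htr1, Complex.ofReal_re]
  rw [hgoal_eq]
  rcases eq_or_lt_of_le hT0 with hTz | hTpos
  · have h1 := trace_mul_psd_re_nonneg hσ hP
    have h2 := Real.sqrt_nonneg (1 - (star ψ ⬝ᵥ (σ *ᵥ ψ)).re)
    rw [← hTz]
    linarith
  -- T > 0
  · set c : ℝ := 1 / Real.sqrt T with hc
    have hsqpos : 0 < Real.sqrt T := Real.sqrt_pos.mpr hTpos
    have hcc : ((c:ℂ)) * ((c:ℂ)) = ((1/T : ℝ) : ℂ) := by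
      rw [← Complex.ofReal_mul]
      congr 1
      rw [hc, div_mul_div_comm, one_mul, Real.mul_self_sqrt hT0]
    set v := ((c:ℝ):ℂ) • w with hv
    have hwwT : star w ⬝ᵥ w = ((T:ℝ):ℂ) := by rw [dot_self_eq_ofReal]
    have hv1 : star v ⬝ᵥ v = 1 := by
      rw [hv, star_smul, smul_dotProduct, dotProduct_smul, hwwT]
      simp only [smul_eq_mul, Complex.star_def, Complex.conj_ofReal]
      rw [← mul_assoc, hcc, ← Complex.ofReal_mul]
      have : 1 / T * T = 1 := by field_simp
      rw [this, Complex.ofReal_one]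
    have hψv : star ψ ⬝ᵥ v = ((c * T : ℝ) : ℂ) := by
      rw [hv, dotProduct_smul, hreal, smul_eq_mul, ← Complex.ofReal_mul]
    have hcT : c * T = Real.sqrt T := by
      rw [hc]
      rw [div_mul_eq_mul_div, one_mul, Real.div_sqrt]
    have hnsψv : Complex.normSq (star ψ ⬝ᵥ v) = T := by
      rw [hψv, Complex.normSq_ofReal, hcT, Real.mul_self_sqrt hT0]
    -- the PSD matrix T•P - |w><w|
    have hM : (((T:ℝ):ℂ) • P - ketbra w).PosSemidef := by
      refine Matrix.PosSemidef.of_dotProduct_mulVec_nonneg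
        (((psd_smul_real hP hT0).1).sub (ketbra_isHermitian w)) fun x => ?_
      rw [Matrix.sub_mulVec, dotProduct_sub, Matrix.smul_mulVec, dotProduct_smul,
        dot_ketbra_mulVec, psd_dot_real hP x]
      set q := (star x ⬝ᵥ (P *ᵥ x)).re with hq
      set cx := star w ⬝ᵥ x with hcx
      have hcy : cx = star w ⬝ᵥ (P *ᵥ x) := by
        rw [hcx, hwdot x, hwdot (P *ᵥ x), Matrix.mulVec_mulVec, hidem]
      have hyq : (star (P *ᵥ x) ⬝ᵥ (P *ᵥ x)).re = q := by
        rw [star_mulVec, ← Matrix.dotProduct_mulVec, hPH, Matrix.mulVec_mulVec, hidem, hq]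
      have hcs := cs_dot w (P *ᵥ x)
      rw [← hcy, hwwT] at hcs
      rw [Complex.ofReal_re] at hcs
      rw [hyq] at hcs
      have : ((T:ℝ):ℂ) • ((q:ℝ):ℂ) - ((Complex.normSq cx : ℝ):ℂ)
          = ((T * q - Complex.normSq cx : ℝ) : ℂ) := by
        rw [smul_eq_mul]
        push_cast
        ring
      rw [this, Complex.zero_le_real]
      linarith
    have htrM := trace_mul_psd_re_nonneg hσ hM
    rw [Matrix.mul_sub, Matrix.trace_sub, Matrix.mul_smul, Matrix.trace_smul,
      trace_mul_ketbra, Complex.sub_re, smul_eq_mul, Complex.re_ofReal_mul] at htrM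
    -- htrM : 0 ≤ T * (σ*P).trace.re - (star w ⬝ᵥ σ *ᵥ w).re
    have hcore := core_ineq hσ hσtr ψ v hψ hv1
    have hvσv : (star v ⬝ᵥ (σ *ᵥ v)).re = (c * c) * (star w ⬝ᵥ (σ *ᵥ w)).re := by
      rw [hv, star_smul, Matrix.mulVec_smul, smul_dotProduct, dotProduct_smul]
      simp only [smul_eq_mul, Complex.star_def, Complex.conj_ofReal]
      rw [← mul_assoc, ← Complex.ofReal_mul, Complex.re_ofReal_mul]
    rw [hnsψv, hvσv] at hcore
    have hccT : c * c = 1 / T := by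
      rw [hc, div_mul_div_comm, one_mul, Real.mul_self_sqrt hT0]
    rw [hccT] at hcore
    -- hcore : T - 1/T * (wσw).re ≤ √(1-F), htrM : 0 ≤ T*(σP).re - (wσw).re
    have hwσ0 : (star w ⬝ᵥ (σ *ᵥ w)).re ≤ T * (σ * P).trace.re := by linarith
    have : T - (σ * P).trace.re ≤ T - 1/T * (star w ⬝ᵥ (σ *ᵥ w)).re := by
      have h3 : 1/T * (star w ⬝ᵥ (σ *ᵥ w)).re ≤ (σ * P).trace.re := by
        rw [div_mul_eq_mul_div, one_mul, div_le_iff₀ hTpos]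
        linarith [hwσ0]
      linarith
    linarith
end Proj

section Base
variable {d : ℕ}

lemma conj_diag_psd (U : Matrix (Fin d) (Fin d) ℂ) (c : Fin d → ℝ) (hc : ∀ i, 0 ≤ c i) :
    (U * Matrix.diagonal (fun i => ((c i : ℝ) : ℂ)) * Uᴴ).PosSemidef := by
  apply Matrix.PosSemidef.mul_mul_conjTranspose_same
  apply Matrix.PosSemidef.diagonal
  intro i
  show (0:ℂ) ≤ ((c i : ℝ) : ℂ)
  rw [Complex.zero_le_real]
  exact hc i

lemma trace_conj_diag {U : Matrix (Fin d) (Fin d) ℂ} (hU : Uᴴ * U = 1)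
    (f : Fin d → ℂ) :
    (U * Matrix.diagonal f * Uᴴ).trace = ∑ i, f i := by
  rw [Matrix.trace_mul_comm, ← Matrix.mul_assoc, hU, Matrix.one_mul, Matrix.trace_diagonal]

lemma conj_diag_mul {U : Matrix (Fin d) (Fin d) ℂ} (hU2 : Uᴴ * U = 1) (f g : Fin d → ℂ) :
    (U * Matrix.diagonal f * Uᴴ) * (U * Matrix.diagonal g * Uᴴ)
      = U * Matrix.diagonal (fun i => f i * g i) * Uᴴ := by
  rw [← Matrix.diagonal_mul_diagonal]
  simp only [Matrix.mul_assoc]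
  rw [← Matrix.mul_assoc Uᴴ U, hU2, Matrix.one_mul]

lemma base_decomp {σ : Matrix (Fin d) (Fin d) ℂ} (hσ : σ.PosSemidef) (hσtr : σ.trace = 1)
    (ψ : Fin d → ℂ) (hψ : star ψ ⬝ᵥ ψ = 1) :
    ∃ A B : Matrix (Fin d) (Fin d) ℂ, A.PosSemidef ∧ B.PosSemidef ∧
      σ - ketbra ψ = A - B ∧
      (A.trace + B.trace).re ≤ 2 * Real.sqrt (1 - (star ψ ⬝ᵥ (σ *ᵥ ψ)).re) := by
  set D := σ - ketbra ψ with hDdef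
  have hD : D.IsHermitian := hσ.1.sub (ketbra_isHermitian ψ)
  set U : Matrix (Fin d) (Fin d) ℂ :=
    (Matrix.IsHermitian.eigenvectorUnitary hD : Matrix (Fin d) (Fin d) ℂ) with hUdef
  set lam : Fin d → ℝ := hD.eigenvalues with hlam
  have hUmem := (Matrix.IsHermitian.eigenvectorUnitary hD).2
  have hU2 : Uᴴ * U = 1 := by
    rw [← Matrix.star_eq_conjTranspose]
    exact (Matrix.mem_unitaryGroup_iff').mp hUmem
  have hspec : D = U * Matrix.diagonal (fun i => ((lam i : ℝ) : ℂ)) * Uᴴ := by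
    have h := hD.spectral_theorem
    rw [Unitary.conjStarAlgAut_apply] at h
    rw [← Matrix.star_eq_conjTranspose]
    exact h
  have htrD : D.trace = 0 := by
    rw [hDdef, Matrix.trace_sub, hσtr, trace_ketbra, hψ, sub_self]
  have hsumlam : ∑ i, lam i = 0 := by
    have h1 : D.trace = ((∑ i, lam i : ℝ) : ℂ) := by
      rw [hspec, trace_conj_diag hU2]
      push_cast
      rfl
    rw [htrD] at h1
    exact_mod_cast h1.symm
  set A : Matrix (Fin d) (Fin d) ℂ :=
    U * Matrix.diagonal (fun i => ((max (lam i) 0 : ℝ) : ℂ)) * Uᴴ with hA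
  set B : Matrix (Fin d) (Fin d) ℂ :=
    U * Matrix.diagonal (fun i => ((max (-lam i) 0 : ℝ) : ℂ)) * Uᴴ with hB
  set Pr : Matrix (Fin d) (Fin d) ℂ :=
    U * Matrix.diagonal (fun i => ((if lam i < 0 then (1:ℝ) else 0 : ℝ) : ℂ)) * Uᴴ with hPr
  refine ⟨A, B, conj_diag_psd U _ (fun i => le_max_right _ _),
    conj_diag_psd U _ (fun i => le_max_right _ _), ?_, ?_⟩
  · have hfun : (fun i => ((max (lam i) 0 : ℝ) : ℂ) - ((max (-lam i) 0 : ℝ) : ℂ))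
        = fun i => ((lam i : ℝ) : ℂ) := by
      funext i
      rw [← Complex.ofReal_sub, max_zero_sub_max_neg_zero_eq_self]
    rw [hA, hB, ← Matrix.sub_mul, ← Matrix.mul_sub, Matrix.diagonal_sub, hfun]
    exact hspec
  · have hPrPsd : Pr.PosSemidef := conj_diag_psd U _ (fun i => by positivity)
    have hPridem : Pr * Pr = Pr := by
      have hfun2 : (fun i => ((if lam i < 0 then (1:ℝ) else 0 : ℝ) : ℂ)
            * ((if lam i < 0 then (1:ℝ) else 0 : ℝ) : ℂ))
          = fun i => ((if lam i < 0 then (1:ℝ) else 0 : ℝ) : ℂ) := by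
        funext i
        by_cases h : lam i < 0 <;> simp [h]
      rw [hPr, conj_diag_mul hU2, hfun2]
    have hproj := proj_bound hσ hσtr ψ hψ Pr hPrPsd hPridem
    have h2 : D * Pr = U * Matrix.diagonal
        (fun i => ((lam i : ℝ) : ℂ) * ((if lam i < 0 then (1:ℝ) else 0 : ℝ) : ℂ)) * Uᴴ := by
      rw [hspec, hPr, conj_diag_mul hU2]
    have htrDPr : ((ketbra ψ - σ) * Pr).trace
        = ((∑ i, (if lam i < 0 then -lam i else 0) : ℝ) : ℂ) := by
      have h1 : ketbra ψ - σ = -D := by rw [hDdef, neg_sub]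
      rw [h1, Matrix.neg_mul, Matrix.trace_neg, h2, trace_conj_diag hU2]
      push_cast
      rw [← Finset.sum_neg_distrib]
      apply Finset.sum_congr rfl; intro i _
      by_cases h : lam i < 0 <;> simp [h]
    have htrA : A.trace = ((∑ i, max (lam i) 0 : ℝ) : ℂ) := by
      rw [hA, trace_conj_diag hU2]; push_cast; rfl
    have htrB : B.trace = ((∑ i, max (-lam i) 0 : ℝ) : ℂ) := by
      rw [hB, trace_conj_diag hU2]; push_cast; rfl
    rw [htrA, htrB, ← Complex.ofReal_add, Complex.ofReal_re]
    have hsum : ∑ i, max (lam i) 0 + ∑ i, max (-lam i) 0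
        = (∑ i, lam i) + 2 * ∑ i, (if lam i < 0 then -lam i else 0) := by
      rw [← Finset.sum_add_distrib, Finset.mul_sum, ← Finset.sum_add_distrib]
      apply Finset.sum_congr rfl; intro i _
      by_cases h : lam i < 0
      · rw [max_eq_right h.le, max_eq_left (by linarith : (0:ℝ) ≤ -lam i)]
        simp [h]
        ring
      · rw [max_eq_left (not_lt.mp h), max_eq_right (by simp at h; linarith : -lam i ≤ 0)]
        simp [h]
    rw [hsum, hsumlam]
    have hlast := hproj
    rw [htrDPr, Complex.ofReal_re] at hlast
    linarith
end Base

section TraceNorm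
variable {n : Type*} [Fintype n] [DecidableEq n]

lemma conj_diag_psd' (U : Matrix n n ℂ) (c : n → ℝ) (hc : ∀ i, 0 ≤ c i) :
    (U * Matrix.diagonal (fun i => ((c i : ℝ) : ℂ)) * Uᴴ).PosSemidef := by
  apply Matrix.PosSemidef.mul_mul_conjTranspose_same
  apply Matrix.PosSemidef.diagonal
  intro i
  show (0:ℂ) ≤ ((c i : ℝ) : ℂ)
  rw [Complex.zero_le_real]
  exact hc i

lemma trace_conj_diag' {U : Matrix n n ℂ} (hU : Uᴴ * U = 1) (f : n → ℂ) :
    (U * Matrix.diagonal f * Uᴴ).trace = ∑ i, f i := by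
  rw [Matrix.trace_mul_comm, ← Matrix.mul_assoc, hU, Matrix.one_mul, Matrix.trace_diagonal]

lemma conj_diag_mul' {U : Matrix n n ℂ} (hU2 : Uᴴ * U = 1) (f g : n → ℂ) :
    (U * Matrix.diagonal f * Uᴴ) * (U * Matrix.diagonal g * Uᴴ)
      = U * Matrix.diagonal (fun i => f i * g i) * Uᴴ := by
  rw [← Matrix.diagonal_mul_diagonal]
  simp only [Matrix.mul_assoc]
  rw [← Matrix.mul_assoc Uᴴ U, hU2, Matrix.one_mul]

lemma traceNorm_sub_le {P Q : Matrix n n ℂ} (hP : P.PosSemidef) (hQ : Q.PosSemidef) :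
    traceNorm (P - Q) ≤ (P.trace + Q.trace).re := by
  set A := P - Q with hAdef
  have hA : A.IsHermitian := hP.1.sub hQ.1
  set U : Matrix n n ℂ := (Matrix.IsHermitian.eigenvectorUnitary hA : Matrix n n ℂ) with hU
  set lam := hA.eigenvalues with hlam
  have hUmem := (Matrix.IsHermitian.eigenvectorUnitary hA).2
  have hU1 : U * Uᴴ = 1 := by
    rw [← Matrix.star_eq_conjTranspose]
    exact (Matrix.mem_unitaryGroup_iff).mp hUmem
  have hU2 : Uᴴ * U = 1 := by
    rw [← Matrix.star_eq_conjTranspose]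
    exact (Matrix.mem_unitaryGroup_iff').mp hUmem
  have hdiagU : Uᴴ * A * U = Matrix.diagonal (fun i => ((lam i : ℝ) : ℂ)) := by
    have h := hA.spectral_theorem
    rw [Unitary.conjStarAlgAut_apply] at h
    have h' : A = U * Matrix.diagonal (fun i => ((lam i : ℝ) : ℂ)) * Uᴴ := by
      rw [← Matrix.star_eq_conjTranspose]
      exact h
    rw [h']
    simp only [Matrix.mul_assoc]
    rw [hU2, Matrix.mul_one, ← Matrix.mul_assoc, hU2, Matrix.one_mul]
  have hAspec : A = U * Matrix.diagonal (fun i => ((lam i : ℝ) : ℂ)) * Uᴴ := by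
    have h := hA.spectral_theorem
    rw [Unitary.conjStarAlgAut_apply] at h
    rw [← Matrix.star_eq_conjTranspose]
    exact h
  set S := U * Matrix.diagonal (fun i => ((|lam i| : ℝ) : ℂ)) * Uᴴ with hS
  have hSpsd : S.PosSemidef := conj_diag_psd' U _ (fun i => abs_nonneg _)
  have hS2 : S * S = Aᴴ * A := by
    rw [hS, conj_diag_mul' hU2, hA.eq]
    conv_rhs => rw [hAspec]
    rw [conj_diag_mul' hU2]
    have : (fun i => ((|lam i| : ℝ) : ℂ) * ((|lam i| : ℝ) : ℂ))
        = fun i => ((lam i : ℝ) : ℂ) * ((lam i : ℝ) : ℂ) := by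
      funext i
      rw [← Complex.ofReal_mul, ← Complex.ofReal_mul, abs_mul_abs_self]
    rw [this]
  have hsqrt : ((Matrix.posSemidef_conjTranspose_mul_self A).1.eigenvectorUnitary.1 *
      diagonal (((↑) : ℝ → ℂ) ∘ (√·) ∘ (Matrix.posSemidef_conjTranspose_mul_self A).1.eigenvalues) *
      (star (Matrix.posSemidef_conjTranspose_mul_self A).1.eigenvectorUnitary : Matrix n n ℂ)) = S := by
    have key : ∀ (H : (Aᴴ * A).IsHermitian), (∀ i, 0 ≤ H.eigenvalues i) →
        (H.eigenvectorUnitary.1 * diagonal (((↑) : ℝ → ℂ) ∘ (√·) ∘ H.eigenvalues) *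
        (star H.eigenvectorUnitary : Matrix n n ℂ)) = S := by
      intro H hev
      set V : Matrix n n ℂ := H.eigenvectorUnitary.1 with hV
      have hV2 : Vᴴ * V = 1 := by
        rw [← Matrix.star_eq_conjTranspose]
        exact (Matrix.mem_unitaryGroup_iff').mp H.eigenvectorUnitary.2
      have hT : H.eigenvectorUnitary.1 * diagonal (((↑) : ℝ → ℂ) ∘ (√·) ∘ H.eigenvalues) *
          (star H.eigenvectorUnitary : Matrix n n ℂ)
          = V * Matrix.diagonal (fun i => ((√(H.eigenvalues i) : ℝ) : ℂ)) * Vᴴ := rfl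
      rw [hT]
      have hTpsd := conj_diag_psd' V (fun i => √(H.eigenvalues i)) (fun i => Real.sqrt_nonneg _)
      have hTT : (V * Matrix.diagonal (fun i => ((√(H.eigenvalues i) : ℝ) : ℂ)) * Vᴴ) *
          (V * Matrix.diagonal (fun i => ((√(H.eigenvalues i) : ℝ) : ℂ)) * Vᴴ) = Aᴴ * A := by
        rw [conj_diag_mul' hV2]
        have h := H.spectral_theorem
        rw [Unitary.conjStarAlgAut_apply] at h
        conv_rhs => rw [h]
        have : (fun i => ((√(H.eigenvalues i) : ℝ) : ℂ) * ((√(H.eigenvalues i) : ℝ) : ℂ))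
            = ((↑) : ℝ → ℂ) ∘ H.eigenvalues := by
          funext i
          rw [← Complex.ofReal_mul, Real.mul_self_sqrt (hev i)]
          rfl
        rw [this]
        rfl
      exact (CFC.sqrt_unique hTT hTpsd.nonneg).symm.trans (CFC.sqrt_unique hS2 hSpsd.nonneg)
    exact key _ (fun i => (Matrix.posSemidef_conjTranspose_mul_self A).eigenvalues_nonneg i)
  have htn : traceNorm A = ∑ i, |lam i| := by
    rw [traceNorm, hsqrt, hS, trace_conj_diag' hU2]
    push_cast
    rw [Complex.re_sum]
    apply Finset.sum_congr rfl; intro i _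
    rw [Complex.ofReal_re]
  rw [htn]
  -- diagonal entries
  have hd : Matrix.diagonal (fun i => ((lam i : ℝ) : ℂ)) = Uᴴ * P * U - Uᴴ * Q * U := by
    rw [← hdiagU, hAdef, Matrix.mul_sub, Matrix.sub_mul]
  have hPi : ∀ i, 0 ≤ ((Uᴴ * P * U) i i).re :=
    fun i => psd_diag_re_nonneg (hP.conjTranspose_mul_mul_same U) i
  have hQi : ∀ i, 0 ≤ ((Uᴴ * Q * U) i i).re :=
    fun i => psd_diag_re_nonneg (hQ.conjTranspose_mul_mul_same U) i
  have hlam_eq : ∀ i, lam i = ((Uᴴ * P * U) i i).re - ((Uᴴ * Q * U) i i).re := by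
    intro i
    have h1 : ((lam i : ℝ) : ℂ) = (Uᴴ * P * U) i i - (Uᴴ * Q * U) i i := by
      have := congrFun (congrFun hd i) i
      rw [Matrix.diagonal_apply_eq] at this
      rw [this]
      rfl
    have := congrArg Complex.re h1
    rwa [Complex.ofReal_re, Complex.sub_re] at this
  have hbound : ∀ i, |lam i| ≤ ((Uᴴ * P * U) i i).re + ((Uᴴ * Q * U) i i).re := by
    intro i
    rw [abs_le]
    constructor
    · rw [hlam_eq i]; linarith [hPi i, hQi i]
    · rw [hlam_eq i]; linarith [hPi i, hQi i]
  have htrP : (Uᴴ * P * U).trace = P.trace := by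
    rw [Matrix.trace_mul_cycle, hU1, Matrix.one_mul]
  have htrQ : (Uᴴ * Q * U).trace = Q.trace := by
    rw [Matrix.trace_mul_cycle, hU1, Matrix.one_mul]
  calc ∑ i, |lam i| ≤ ∑ i, (((Uᴴ * P * U) i i).re + ((Uᴴ * Q * U) i i).re) :=
        Finset.sum_le_sum fun i _ => hbound i
    _ = (Uᴴ * P * U).trace.re + (Uᴴ * Q * U).trace.re := by
        rw [Finset.sum_add_distrib, Matrix.trace, Matrix.trace, Complex.re_sum, Complex.re_sum]
        rfl
    _ = (P.trace + Q.trace).re := by rw [htrP, htrQ, Complex.add_re]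

end TraceNorm

section Kron
variable {d : ℕ}

noncomputable def kcons {k : ℕ} (M : Matrix (Fin d) (Fin d) ℂ)
    (N : Matrix (Fin k → Fin d) (Fin k → Fin d) ℂ) :
    Matrix (Fin (k+1) → Fin d) (Fin (k+1) → Fin d) ℂ :=
  fun i j => M (i 0) (j 0) * N (fun t => i t.succ) (fun t => j t.succ)

lemma kronPow_succ (M : Matrix (Fin d) (Fin d) ℂ) (k : ℕ) :
    kronPow M (k+1) = kcons M (kronPow M k) := by
  funext i j
  simp [kronPow, kcons, Fin.prod_univ_succ]

lemma kcons_conjTranspose {k : ℕ} (M : Matrix (Fin d) (Fin d) ℂ)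
    (N : Matrix (Fin k → Fin d) (Fin k → Fin d) ℂ) :
    (kcons M N)ᴴ = kcons Mᴴ Nᴴ := by
  funext i j
  simp [kcons, Matrix.conjTranspose_apply, star_mul']

lemma sum_consEquiv {k : ℕ} (g : (Fin (k+1) → Fin d) → ℂ) :
    ∑ l : Fin (k+1) → Fin d, g l
      = ∑ a : Fin d, ∑ f : Fin k → Fin d, g (Fin.cons a f) := by
  rw [← Equiv.sum_comp (Fin.consEquiv (fun _ : Fin (k+1) => Fin d)) g]
  rw [Fintype.sum_prod_type]
  rfl

lemma kcons_mul {k : ℕ} (M M' : Matrix (Fin d) (Fin d) ℂ)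
    (N N' : Matrix (Fin k → Fin d) (Fin k → Fin d) ℂ) :
    kcons M N * kcons M' N' = kcons (M * M') (N * N') := by
  funext i j
  simp only [Matrix.mul_apply, kcons]
  rw [sum_consEquiv (fun l => (M (i 0) (l 0) * N (fun t => i t.succ) (fun t => l t.succ))
    * (M' (l 0) (j 0) * N' (fun t => l t.succ) (fun t => j t.succ)))]
  rw [Finset.sum_mul_sum]
  apply Finset.sum_congr rfl; intro a _
  apply Finset.sum_congr rfl; intro f _
  simp only [Fin.cons_zero, Fin.cons_succ]
  ring

lemma kcons_trace {k : ℕ} (M : Matrix (Fin d) (Fin d) ℂ)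
    (N : Matrix (Fin k → Fin d) (Fin k → Fin d) ℂ) :
    (kcons M N).trace = M.trace * N.trace := by
  simp only [Matrix.trace, Matrix.diag, kcons]
  rw [sum_consEquiv (fun l => M (l 0) (l 0) * N (fun t => l t.succ) (fun t => l t.succ))]
  rw [Finset.sum_mul_sum]
  apply Finset.sum_congr rfl; intro a _
  apply Finset.sum_congr rfl; intro f _
  simp only [Fin.cons_zero, Fin.cons_succ]

lemma kcons_posSemidef {k : ℕ} {M : Matrix (Fin d) (Fin d) ℂ}
    {N : Matrix (Fin k → Fin d) (Fin k → Fin d) ℂ}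
    (hM : M.PosSemidef) (hN : N.PosSemidef) : (kcons M N).PosSemidef := by
  have h1 : kcons M N = (kcons (CFC.sqrt M) (CFC.sqrt N))ᴴ * (kcons (CFC.sqrt M) (CFC.sqrt N)) := by
    rw [kcons_conjTranspose, kcons_mul, (CFC.sqrt_nonneg M).posSemidef.1.eq,
      (CFC.sqrt_nonneg N).posSemidef.1.eq,
      CFC.sqrt_mul_sqrt_self M hM.nonneg, CFC.sqrt_mul_sqrt_self N hN.nonneg]
  rw [h1]
  exact Matrix.posSemidef_conjTranspose_mul_self _

lemma kronPow_zero_eq_one (M : Matrix (Fin d) (Fin d) ℂ) : kronPow M 0 = 1 := by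
  haveI : Subsingleton (Fin 0 → Fin d) := ⟨fun a b => funext fun x => x.elim0⟩
  funext i j
  have hij : i = j := Subsingleton.elim i j
  subst hij
  simp [kronPow, Matrix.one_apply]

lemma kronPow_posSemidef {M : Matrix (Fin d) (Fin d) ℂ} (hM : M.PosSemidef) (k : ℕ) :
    (kronPow M k).PosSemidef := by
  induction k with
  | zero => rw [kronPow_zero_eq_one]; exact Matrix.PosSemidef.one
  | succ k ih => rw [kronPow_succ]; exact kcons_posSemidef hM ih

lemma kronPow_trace (M : Matrix (Fin d) (Fin d) ℂ) (k : ℕ) :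
    (kronPow M k).trace = M.trace ^ k := by
  induction k with
  | zero =>
      rw [kronPow_zero_eq_one, pow_zero, Matrix.trace_one]
      haveI : Subsingleton (Fin 0 → Fin d) := ⟨fun a b => funext fun x => x.elim0⟩
      have : Fintype.card (Fin 0 → Fin d) = 1 := by
        rw [Fintype.card_eq_one_iff]
        exact ⟨fun x => x.elim0, fun y => Subsingleton.elim y _⟩
      rw [this]
      norm_num
  | succ k ih => rw [kronPow_succ, kcons_trace, ih, pow_succ]; ring

lemma kcons_sub_right {k : ℕ} (M : Matrix (Fin d) (Fin d) ℂ)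
    (N N' : Matrix (Fin k → Fin d) (Fin k → Fin d) ℂ) :
    kcons M (N - N') = kcons M N - kcons M N' := by
  funext i j
  simp [kcons, Matrix.sub_apply, mul_sub]

lemma kcons_sub_left {k : ℕ} (M M' : Matrix (Fin d) (Fin d) ℂ)
    (N : Matrix (Fin k → Fin d) (Fin k → Fin d) ℂ) :
    kcons (M - M') N = kcons M N - kcons M' N := by
  funext i j
  simp [kcons, Matrix.sub_apply, sub_mul]

lemma kron_decomp (σM P A0 B0 : Matrix (Fin d) (Fin d) ℂ) (hσ : σM.PosSemidef)
    (hP : P.PosSemidef) (hσt : σM.trace = 1) (hPt : P.trace = 1)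
    (hA0 : A0.PosSemidef) (hB0 : B0.PosSemidef) (hdec : σM - P = A0 - B0) (k : ℕ) :
    ∃ A B : Matrix (Fin k → Fin d) (Fin k → Fin d) ℂ, A.PosSemidef ∧ B.PosSemidef ∧
      kronPow σM k - kronPow P k = A - B ∧
      A.trace = (k : ℂ) * A0.trace ∧ B.trace = (k : ℂ) * B0.trace := by
  induction k with
  | zero =>
      refine ⟨0, 0, Matrix.PosSemidef.zero, Matrix.PosSemidef.zero, ?_, by simp, by simp⟩
      rw [kronPow_zero_eq_one, kronPow_zero_eq_one]
      simp
  | succ k ih =>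
      obtain ⟨A, B, hA, hB, hABeq, hAt, hBt⟩ := ih
      refine ⟨kcons σM A + kcons A0 (kronPow P k), kcons σM B + kcons B0 (kronPow P k),
        (kcons_posSemidef hσ hA).add (kcons_posSemidef hA0 (kronPow_posSemidef hP k)),
        (kcons_posSemidef hσ hB).add (kcons_posSemidef hB0 (kronPow_posSemidef hP k)),
        ?_, ?_, ?_⟩
      · rw [kronPow_succ, kronPow_succ]
        have e1 : kcons σM (kronPow σM k) - kcons P (kronPow P k)
            = kcons σM (kronPow σM k - kronPow P k) + kcons (σM - P) (kronPow P k) := by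
          rw [kcons_sub_right, kcons_sub_left]
          abel
        rw [e1, hABeq, hdec, kcons_sub_right, kcons_sub_left]
        abel
      · rw [Matrix.trace_add, kcons_trace, kcons_trace, hσt, kronPow_trace, hPt, hAt]
        push_cast
        ring
      · rw [Matrix.trace_add, kcons_trace, kcons_trace, hσt, kronPow_trace, hPt, hBt]
        push_cast
        ring

end Kron

end Aux

lemma psd_sum {n ι : Type*} [Fintype n] [DecidableEq n] (s : Finset ι)
    (f : ι → Matrix n n ℂ) (h : ∀ z ∈ s, (f z).PosSemidef) :
    (∑ z ∈ s, f z).PosSemidef :=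
  Finset.sum_induction f (fun X => X.PosSemidef) (fun _ _ ha hb => ha.add hb)
    Matrix.PosSemidef.zero h

/-- Mixture of Kronecker powers is close to the pure Kronecker power,
bounded by the average square-root infidelity. -/
theorem mixture_kronPow_trace_dist_le {d m : ℕ} (ψ : Fin d → ℂ)
    (hψ : ∑ i, ‖ψ i‖ ^ 2 = 1)
    (k : ℕ) (hk : 1 ≤ k)
    (p : Fin m → ℝ) (hp0 : ∀ z, 0 ≤ p z) (hp1 : ∑ z, p z = 1)
    (σ : Fin m → Matrix (Fin d) (Fin d) ℂ)
    (hσ : ∀ z, (σ z).PosSemidef) (hσtr : ∀ z, (σ z).trace = 1) :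
    (1 / 2 : ℝ) * traceNorm (∑ z, (p z : ℂ) • kronPow (σ z) k - kronPow (ketbra ψ) k)
      ≤ (k : ℝ) * ∑ z, p z * Real.sqrt (1 - fid ψ (σ z)) := by
  have hψ1 : star ψ ⬝ᵥ ψ = 1 := by
    rw [dot_self_eq_ofReal]
    have h1 : ∑ i, Complex.normSq (ψ i) = 1 := by
      rw [← hψ]
      apply Finset.sum_congr rfl; intro i _
      rw [← Complex.sq_norm]
    rw [h1, Complex.ofReal_one]
  have hPpsd := ketbra_posSemidef ψ
  have hPtr : (ketbra ψ).trace = 1 := by rw [trace_ketbra, hψ1]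
  have hfid : ∀ z, fid ψ (σ z) = (star ψ ⬝ᵥ (σ z *ᵥ ψ)).re := by
    intro z
    rw [fid]
    congr 1
    simp only [dotProduct, mulVec, Finset.mul_sum]
    apply Finset.sum_congr rfl; intro i _
    apply Finset.sum_congr rfl; intro j _
    simp [Pi.star_apply]
    ring
  have hbase : ∀ z, ∃ A B : Matrix (Fin d) (Fin d) ℂ, A.PosSemidef ∧ B.PosSemidef ∧
      σ z - ketbra ψ = A - B ∧
      (A.trace + B.trace).re ≤ 2 * Real.sqrt (1 - (star ψ ⬝ᵥ (σ z *ᵥ ψ)).re) :=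
    fun z => base_decomp (hσ z) (hσtr z) ψ hψ1
  choose A0 B0 hA0 hB0 hdec htr0 using hbase
  have hkron : ∀ z, ∃ A B : Matrix (Fin k → Fin d) (Fin k → Fin d) ℂ,
      A.PosSemidef ∧ B.PosSemidef ∧
      kronPow (σ z) k - kronPow (ketbra ψ) k = A - B ∧
      A.trace = (k : ℂ) * (A0 z).trace ∧ B.trace = (k : ℂ) * (B0 z).trace :=
    fun z => kron_decomp (σ z) (ketbra ψ) (A0 z) (B0 z) (hσ z) hPpsd (hσtr z) hPtr
      (hA0 z) (hB0 z) (hdec z) k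
  choose A B hA hB hABeq hAt hBt using hkron
  set Atot := ∑ z, (p z : ℂ) • A z with hAtot
  set Btot := ∑ z, (p z : ℂ) • B z with hBtot
  have hAtotPsd : Atot.PosSemidef :=
    psd_sum _ _ (fun z _ => psd_smul_real (hA z) (hp0 z))
  have hBtotPsd : Btot.PosSemidef :=
    psd_sum _ _ (fun z _ => psd_smul_real (hB z) (hp0 z))
  have hp1' : (∑ z, (p z : ℂ)) = 1 := by
    rw [← Complex.ofReal_sum, hp1, Complex.ofReal_one]
  have hsplit : ∑ z, (p z : ℂ) • kronPow (σ z) k - kronPow (ketbra ψ) k = Atot - Btot := by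
    have h1 : ∑ z, (p z : ℂ) • kronPow (σ z) k - kronPow (ketbra ψ) k
        = ∑ z, (p z : ℂ) • (kronPow (σ z) k - kronPow (ketbra ψ) k) := by
      simp only [smul_sub, Finset.sum_sub_distrib]
      rw [← Finset.sum_smul, hp1', one_smul]
    rw [h1]
    have h2 : ∀ z ∈ Finset.univ, (p z : ℂ) • (kronPow (σ z) k - kronPow (ketbra ψ) k)
        = (p z : ℂ) • A z - (p z : ℂ) • B z := by
      intro z _
      rw [hABeq z, smul_sub]
    rw [Finset.sum_congr rfl h2, Finset.sum_sub_distrib]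
  rw [hsplit]
  have hTN := traceNorm_sub_le hAtotPsd hBtotPsd
  -- compute the trace bound
  have htrace : (Atot.trace + Btot.trace).re
      = ∑ z, p z * ((k : ℝ) * ((A0 z).trace + (B0 z).trace).re) := by
    rw [hAtot, hBtot, Matrix.trace_sum, Matrix.trace_sum, ← Finset.sum_add_distrib]
    rw [Complex.re_sum]
    apply Finset.sum_congr rfl; intro z _
    rw [Matrix.trace_smul, Matrix.trace_smul, smul_eq_mul, smul_eq_mul, hAt z, hBt z]
    have : (p z : ℂ) * ((k : ℂ) * (A0 z).trace) + (p z : ℂ) * ((k : ℂ) * (B0 z).trace)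
        = ((p z * (k:ℝ) : ℝ) : ℂ) * ((A0 z).trace + (B0 z).trace) := by
      push_cast
      ring
    rw [this, Complex.re_ofReal_mul]
    ring
  have hbound : (Atot.trace + Btot.trace).re
      ≤ ∑ z, p z * ((k : ℝ) * (2 * Real.sqrt (1 - fid ψ (σ z)))) := by
    rw [htrace]
    apply Finset.sum_le_sum
    intro z _
    apply mul_le_mul_of_nonneg_left _ (hp0 z)
    apply mul_le_mul_of_nonneg_left _ (by positivity : (0:ℝ) ≤ (k:ℝ))
    rw [hfid z]
    exact htr0 z
  have hfinal : (1/2 : ℝ) * traceNorm (Atot - Btot)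
      ≤ (1/2 : ℝ) * ∑ z, p z * ((k : ℝ) * (2 * Real.sqrt (1 - fid ψ (σ z)))) := by
    apply mul_le_mul_of_nonneg_left _ (by norm_num)
    linarith
  calc (1/2 : ℝ) * traceNorm (Atot - Btot)
      ≤ (1/2 : ℝ) * ∑ z, p z * ((k : ℝ) * (2 * Real.sqrt (1 - fid ψ (σ z)))) := hfinal
    _ = (k : ℝ) * ∑ z, p z * Real.sqrt (1 - fid ψ (σ z)) := by
        rw [Finset.mul_sum, Finset.mul_sum]
        apply Finset.sum_congr rfl; intro z _
        ring
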